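/- Let P be a probability measure on infinite binary sequences, x a finite string with P(Γ_x) > 0, and M a nonnegative P-supermartingale. Let A be a set of strings extending x with P(Ã) > 0, where Ã = ∪_{y∈A} Γ_y. For any 0 < μ < 1, there exists A' ⊆ A with P(Ã') > μ·P(Ã) such that for all y ∈ A' and all j with l(x) ≤ j ≤ l(y), M(y^j) ≤ M(x) / ((1-μ)·P(Ã|x)), where P(Ã|x) = P(Ã)/P(Γ_x) and y^j is the length-j prefix of y. -/

import Mathlib

open MeasureTheory Filter Asymptotics
open scoped ENNReal

/-- The length-`n` prefix of an infinite binary sequence, as a list. -/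
def pref (ω : ℕ → Bool) (n : ℕ) : List Bool := (List.range n).map ω

/-- `a` is a (finite) prefix of the infinite sequence `ω`. -/
def PrefixOf (a : List Bool) (ω : ℕ → Bool) : Prop := pref ω a.length = a

/-- The cylinder set of infinite sequences extending the string `x`. -/
def Cyl (x : List Bool) : Set (ℕ → Bool) := {ω | PrefixOf x ω}

/-- Plain Kolmogorov complexity of `x` with respect to a decoding function `U`. -/
noncomputable def PC (U : List Bool →. List Bool) (x : List Bool) : ℕ :=
  sInf {n | ∃ p : List Bool, p.length = n ∧ x ∈ U p}

/-- `U` is an optimal (universal) partial computable decoding function for plain complexity. -/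
def PlainOptimal (U : List Bool →. List Bool) : Prop :=
  Partrec U ∧
    ∀ V : List Bool →. List Bool, Partrec V → ∃ c : ℕ, ∀ x p : List Bool,
      x ∈ V p → PC U x ≤ p.length + c

/-- An r.e. monotone machine representation: `R p x` means that on program `p`
the machine (eventually) outputs an extension of `x`. -/
def MonotoneRepr (R : List Bool → List Bool → Prop) : Prop :=
  REPred (fun q : List Bool × List Bool => R q.1 q.2) ∧
  (∀ p x p' x', R p x → R p' x' → p <+: p' → (x <+: x' ∨ x' <+: x)) ∧
  (∀ p x x', R p x → x' <+: x → R p x')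

/-- Monotone complexity with respect to a monotone machine representation `R`. -/
noncomputable def KmR (R : List Bool → List Bool → Prop) (x : List Bool) : ℕ :=
  sInf {n | ∃ p : List Bool, p.length = n ∧ R p x}

/-- `R` is an optimal monotone machine, so `KmR R` is the monotone complexity `Km`. -/
def MonotoneOptimal (R : List Bool → List Bool → Prop) : Prop :=
  MonotoneRepr R ∧
    ∀ R', MonotoneRepr R' → ∃ c : ℕ, ∀ x p : List Bool, R' p x → KmR R x ≤ p.length + c

lemma pref_length (ω : ℕ → Bool) (n : ℕ) : (pref ω n).length = n := by simp [pref]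

lemma pref_take (ω : ℕ → Bool) {k n : ℕ} (h : k ≤ n) : (pref ω n).take k = pref ω k := by
  simp only [pref, ← List.map_take, List.take_range, min_eq_left h]

lemma mem_Cyl {x : List Bool} {ω : ℕ → Bool} : ω ∈ Cyl x ↔ pref ω x.length = x := Iff.rfl

lemma Cyl_mono {x y : List Bool} (h : x <+: y) : Cyl y ⊆ Cyl x := by
  intro ω hω
  rw [mem_Cyl] at hω ⊢
  rw [← pref_take ω h.length_le, hω, ← List.prefix_iff_eq_take.mp h]

lemma measurableSet_Cyl (x : List Bool) : MeasurableSet (Cyl x) := by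
  have : Cyl x = ⋂ i ∈ Finset.range x.length, {ω : ℕ → Bool | ω i = x.getD i false} := by
    ext ω
    simp only [mem_Cyl, Set.mem_iInter, Set.mem_setOf_eq, Finset.mem_range]
    constructor
    · intro h i hi
      have h1 : i < (pref ω x.length).length := by rw [pref_length]; exact hi
      have h2 : (pref ω x.length).getD i false = (pref ω x.length)[i] :=
        List.getD_eq_getElem (pref ω x.length) false h1
      have h3 : (pref ω x.length)[i] = ω i := by simp [pref]
      rw [← h, h2, h3]
    · intro h
      apply List.ext_getElem (pref_length ω x.length)
      intro i h1 h2
      have : (pref ω x.length)[i] = ω i := by simp [pref]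
      rw [this, h i h2, List.getD_eq_getElem x false h2]
  rw [this]
  exact MeasurableSet.biInter (Set.to_countable _)
    (fun i _ => (measurable_pi_apply i) (measurableSet_singleton _))

lemma Cyl_disjoint {x y : List Bool} (hxy : ¬ x <+: y) (hyx : ¬ y <+: x) :
    Disjoint (Cyl x) (Cyl y) := by
  rw [Set.disjoint_left]
  intro ω hx hy
  rw [mem_Cyl] at hx hy
  rcases le_total x.length y.length with h | h
  · exact hxy (by rw [List.prefix_iff_eq_take, ← hy, pref_take ω h, hx])
  · exact hyx (by rw [List.prefix_iff_eq_take, ← hx, pref_take ω h, hy])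

lemma prefix_extend {x z : List Bool} (h : x <+: z) (hne : x ≠ z) :
    (x ++ [false]) <+: z ∨ (x ++ [true]) <+: z := by
  have hlt : x.length < z.length := by
    rcases lt_or_eq_of_le h.length_le with h' | h'
    · exact h'
    · exact absurd (h.eq_of_length h') hne
  have htake : z.take (x.length + 1) = x ++ [z[x.length]] := by
    rw [List.take_succ, ← List.prefix_iff_eq_take.mp h, List.getElem?_eq_getElem hlt]
    rfl
  have hpre : x ++ [z[x.length]] <+: z := htake ▸ List.take_prefix _ z
  cases hb : z[x.length]
  · left; rwa [hb] at hpre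
  · right; rwa [hb] at hpre

section Ville

variable (μ : Measure (ℕ → Bool)) (M : List Bool → ℝ≥0∞)
variable (hsuper : ∀ z : List Bool,
      M (z ++ [false]) * μ (Cyl (z ++ [false])) + M (z ++ [true]) * μ (Cyl (z ++ [true]))
        ≤ M z * μ (Cyl z))

include hsuper

lemma nu_snoc (z : List Bool) (b : Bool) :
    M (z ++ [b]) * μ (Cyl (z ++ [b])) ≤ M z * μ (Cyl z) := by
  cases b
  · exact le_trans le_self_add (hsuper z)
  · exact le_trans le_add_self (hsuper z)

lemma nu_append (z w : List Bool) :
    M (z ++ w) * μ (Cyl (z ++ w)) ≤ M z * μ (Cyl z) := by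
  induction w using List.reverseRecOn with
  | nil => simp
  | append_singleton w b ih =>
      calc M (z ++ (w ++ [b])) * μ (Cyl (z ++ (w ++ [b])))
          = M ((z ++ w) ++ [b]) * μ (Cyl ((z ++ w) ++ [b])) := by rw [List.append_assoc]
        _ ≤ M (z ++ w) * μ (Cyl (z ++ w)) := nu_snoc μ M hsuper _ b
        _ ≤ M z * μ (Cyl z) := ih

lemma ville_aux : ∀ (d : ℕ) (x : List Bool) (F : Finset (List Bool)),
    (∀ z ∈ F, x <+: z ∧ z.length ≤ x.length + d) →
    (∀ z ∈ F, ∀ w ∈ F, z <+: w → z = w) →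
    ∑ z ∈ F, M z * μ (Cyl z) ≤ M x * μ (Cyl x) := by
  intro d
  induction d with
  | zero =>
      intro x F hF _
      have hsub : F ⊆ {x} := by
        intro z hz
        obtain ⟨h1, h2⟩ := hF z hz
        rw [Finset.mem_singleton]
        exact (h1.eq_of_length (le_antisymm h1.length_le (by simpa using h2))).symm
      calc ∑ z ∈ F, M z * μ (Cyl z) ≤ ∑ z ∈ ({x} : Finset (List Bool)), M z * μ (Cyl z) :=
            Finset.sum_le_sum_of_subset hsub
        _ = M x * μ (Cyl x) := Finset.sum_singleton _ _
  | succ d ih =>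
      intro x F hF hanti
      by_cases hxF : x ∈ F
      · have hsub : F ⊆ {x} := by
          intro z hz
          rw [Finset.mem_singleton]
          exact (hanti x hxF z hz (hF z hz).1).symm
        calc ∑ z ∈ F, M z * μ (Cyl z) ≤ ∑ z ∈ ({x} : Finset (List Bool)), M z * μ (Cyl z) :=
              Finset.sum_le_sum_of_subset hsub
          _ = M x * μ (Cyl x) := Finset.sum_singleton _ _
      · classical
        have hsplit := Finset.sum_filter_add_sum_filter_not F (fun z => (x ++ [false]) <+: z)
          (fun z => M z * μ (Cyl z))
        have h0 : ∑ z ∈ F.filter (fun z => (x ++ [false]) <+: z), M z * μ (Cyl z)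
            ≤ M (x ++ [false]) * μ (Cyl (x ++ [false])) := by
          apply ih
          · intro z hz
            rw [Finset.mem_filter] at hz
            refine ⟨hz.2, ?_⟩
            have := (hF z hz.1).2
            simp only [List.length_append, List.length_singleton]
            omega
          · intro z hz w hw
            rw [Finset.mem_filter] at hz hw
            exact hanti z hz.1 w hw.1
        have h1 : ∑ z ∈ F.filter (fun z => ¬ (x ++ [false]) <+: z), M z * μ (Cyl z)
            ≤ M (x ++ [true]) * μ (Cyl (x ++ [true])) := by
          apply ih
          · intro z hz
            rw [Finset.mem_filter] at hz
            have hne : x ≠ z := fun h => hxF (h ▸ hz.1)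
            rcases prefix_extend (hF z hz.1).1 hne with h | h
            · exact absurd h hz.2
            · refine ⟨h, ?_⟩
              have := (hF z hz.1).2
              simp only [List.length_append, List.length_singleton]
              omega
          · intro z hz w hw
            rw [Finset.mem_filter] at hz hw
            exact hanti z hz.1 w hw.1
        calc ∑ z ∈ F, M z * μ (Cyl z)
            = ∑ z ∈ F.filter (fun z => (x ++ [false]) <+: z), M z * μ (Cyl z)
              + ∑ z ∈ F.filter (fun z => ¬ (x ++ [false]) <+: z), M z * μ (Cyl z) := hsplit.symm
          _ ≤ M (x ++ [false]) * μ (Cyl (x ++ [false])) + M (x ++ [true]) * μ (Cyl (x ++ [true])) :=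
              add_le_add h0 h1
          _ ≤ M x * μ (Cyl x) := hsuper x

end Ville

/-- bounded increase of supermartingale values on a large subset of extensions. -/
theorem stmt_6 (μ : Measure (ℕ → Bool)) [IsProbabilityMeasure μ]
    (M : List Bool → ℝ≥0∞) (hroot : M [] ≤ 1)
    (hsuper : ∀ z : List Bool,
      M (z ++ [false]) * μ (Cyl (z ++ [false])) + M (z ++ [true]) * μ (Cyl (z ++ [true]))
        ≤ M z * μ (Cyl z))
    (x : List Bool) (hx : 0 < μ (Cyl x))
    (A : Set (List Bool)) (hA : ∀ y ∈ A, x <+: y)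
    (hApos : 0 < μ (⋃ y ∈ A, Cyl y))
    (t : ℝ) (ht0 : 0 < t) (ht1 : t < 1) :
    ∃ A' ⊆ A,
      ENNReal.ofReal t * μ (⋃ y ∈ A, Cyl y) < μ (⋃ y ∈ A', Cyl y) ∧
      ∀ y ∈ A', ∀ j : ℕ, x.length ≤ j → j ≤ y.length →
        M (y.take j) ≤
          M x / (ENNReal.ofReal (1 - t) * (μ (⋃ y ∈ A, Cyl y) / μ (Cyl x))) := by
  
  classical
  set At := ⋃ y ∈ A, Cyl y with hAtdef
  set d := ENNReal.ofReal (1 - t) * (μ At / μ (Cyl x)) with hddef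
  set c : ℝ≥0∞ := M x / d with hcdef
  set A' : Set (List Bool) :=
    {y | y ∈ A ∧ ∀ j : ℕ, x.length ≤ j → j ≤ y.length → M (y.take j) ≤ c} with hA'def
  refine ⟨A', fun y hy => hy.1, ?_, fun y hy => hy.2⟩
  -- basic facts
  have hμx_ne_top : μ (Cyl x) ≠ ⊤ := measure_ne_top μ _
  have hμx0 : μ (Cyl x) ≠ 0 := hx.ne'
  have hAt_ne_top : μ At ≠ ⊤ := measure_ne_top μ _
  have hAt0 : μ At ≠ 0 := hApos.ne'
  have h1t0 : (0 : ℝ) < 1 - t := by linarith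
  have hd0 : d ≠ 0 := by
    rw [hddef]
    exact mul_ne_zero (ENNReal.ofReal_pos.mpr h1t0).ne' (ENNReal.div_pos hAt0 hμx_ne_top).ne'
  have hdtop : d ≠ ⊤ := by
    rw [hddef]
    exact ENNReal.mul_ne_top ENNReal.ofReal_ne_top (ENNReal.div_lt_top hAt_ne_top hμx0).ne
  -- the set of minimal "bad" strings
  set B : Set (List Bool) :=
    {z | x <+: z ∧ c < M z ∧ ∀ j : ℕ, x.length ≤ j → j < z.length → M (z.take j) ≤ c} with hBdef
  have hBanti : ∀ z ∈ B, ∀ w ∈ B, z <+: w → z = w := by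
    intro z hz w hw hzw
    by_contra hne
    have hlt : z.length < w.length :=
      lt_of_le_of_ne hzw.length_le fun h => hne (hzw.eq_of_length h)
    have hle := hw.2.2 z.length hz.1.length_le hlt
    rw [← List.prefix_iff_eq_take.mp hzw] at hle
    exact absurd hz.2.1 (not_lt.mpr hle)
  -- covering
  have hcover : At ⊆ (⋃ y ∈ A', Cyl y) ∪ (⋃ z ∈ B, Cyl z) := by
    intro ω hω
    rw [hAtdef, Set.mem_iUnion₂] at hω
    obtain ⟨y, hyA, hωy⟩ := hω
    by_cases hy' : y ∈ A'
    · exact Or.inl (Set.mem_biUnion hy' hωy)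
    · right
      have hex : ∃ j : ℕ, x.length ≤ j ∧ j ≤ y.length ∧ c < M (y.take j) := by
        by_contra hno
        push_neg at hno
        exact hy' ⟨hyA, fun j h1 h2 => hno j h1 h2⟩
      have hS : {j : ℕ | x.length ≤ j ∧ j ≤ y.length ∧ c < M (y.take j)}.Nonempty := hex
      set j₀ := sInf {j : ℕ | x.length ≤ j ∧ j ≤ y.length ∧ c < M (y.take j)} with hj₀def
      obtain ⟨hj₀x, hj₀y, hj₀M⟩ := Nat.sInf_mem hS
      have hzlen : (y.take j₀).length = j₀ := by rw [List.length_take]; omega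
      have hzB : y.take j₀ ∈ B := by
        refine ⟨?_, hj₀M, ?_⟩
        · have h5 : (y.take j₀).take x.length = x := by
            rw [List.take_take, min_eq_left hj₀x]
            exact (List.prefix_iff_eq_take.mp (hA y hyA)).symm
          exact List.prefix_iff_eq_take.mpr h5.symm
        · intro j h1 h2
          rw [hzlen] at h2
          have hjS : j ∉ {j : ℕ | x.length ≤ j ∧ j ≤ y.length ∧ c < M (y.take j)} :=
            Nat.notMem_of_lt_sInf h2
          have h6 : (y.take j₀).take j = y.take j := by
            rw [List.take_take, min_eq_left (le_of_lt h2)]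
          rw [h6]
          by_contra hlt
          exact hjS ⟨h1, le_trans (le_of_lt h2) hj₀y, not_le.mp hlt⟩
      exact Set.mem_biUnion hzB (Cyl_mono (List.take_prefix j₀ y) hωy)
  -- disjointness and measure of the bad region
  have hPD : B.PairwiseDisjoint Cyl := fun z hz w hw hne =>
    Cyl_disjoint (fun h => hne (hBanti z hz w hw h)) (fun h => hne (hBanti w hw z hz h).symm)
  have hDmeas : μ (⋃ z ∈ B, Cyl z) = ∑' z : B, μ (Cyl z.val) :=
    measure_biUnion (Set.to_countable B) hPD fun z _ => measurableSet_Cyl z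
  -- Ville's inequality
  have hville : ∑' z : B, M z.val * μ (Cyl z.val) ≤ M x * μ (Cyl x) := by
    apply Summable.tsum_le_of_sum_le ENNReal.summable
    intro s
    have hinj : ∀ a ∈ s, ∀ b ∈ s, a.val = b.val → a = b := fun a _ b _ h => Subtype.ext h
    set G := s.image Subtype.val with hGdef
    have hGB : ∀ z ∈ G, z ∈ B := by
      intro z hz
      rw [hGdef, Finset.mem_image] at hz
      obtain ⟨a, _, rfl⟩ := hz
      exact a.2
    calc ∑ z ∈ s, M z.val * μ (Cyl z.val)
        = ∑ z ∈ G, M z * μ (Cyl z) := by rw [hGdef]; exact (Finset.sum_image (g := Subtype.val) (f := fun z => M z * μ (Cyl z)) hinj).symm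
      _ ≤ M x * μ (Cyl x) :=
          ville_aux μ M hsuper (G.sup List.length) x G
            (fun z hz => ⟨(hGB z hz).1, le_trans (Finset.le_sup hz) (Nat.le_add_left _ _)⟩)
            (fun z hz w hw => hBanti z (hGB z hz) w (hGB w hw))
  -- ruling out the trivial cases
  by_cases hMtop : M x = ⊤
  · have hctop : c = ⊤ := by rw [hcdef, hMtop]; exact ENNReal.top_div_of_ne_top hdtop
    have hsub : At ⊆ ⋃ y ∈ A', Cyl y := by
      rw [hAtdef]
      refine Set.iUnion₂_subset fun y hy => Set.subset_biUnion_of_mem ?_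
      exact ⟨hy, fun j _ _ => by rw [hctop]; exact le_top⟩
    have hlt : ENNReal.ofReal t * μ At < 1 * μ At :=
      (ENNReal.mul_lt_mul_iff_left hAt0 hAt_ne_top).mpr (ENNReal.ofReal_lt_one.mpr ht1)
    rw [one_mul] at hlt
    exact lt_of_lt_of_le hlt (measure_mono hsub)
  by_cases hM0 : M x = 0
  · have hBnull : ∀ z ∈ B, μ (Cyl z) = 0 := by
      intro z hz
      obtain ⟨w, rfl⟩ := hz.1
      have h := nu_append μ M hsuper x w
      rw [hM0, zero_mul, nonpos_iff_eq_zero, mul_eq_zero] at h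
      rcases h with h | h
      · exact absurd h (pos_of_gt hz.2.1).ne'
      · exact h
    have hD0 : μ (⋃ z ∈ B, Cyl z) = 0 :=
      (measure_biUnion_null_iff (Set.to_countable B)).mpr hBnull
    have hle : μ At ≤ μ (⋃ y ∈ A', Cyl y) := by
      calc μ At ≤ μ ((⋃ y ∈ A', Cyl y) ∪ (⋃ z ∈ B, Cyl z)) := measure_mono hcover
        _ ≤ μ (⋃ y ∈ A', Cyl y) + μ (⋃ z ∈ B, Cyl z) := measure_union_le _ _
        _ = μ (⋃ y ∈ A', Cyl y) := by rw [hD0, add_zero]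
    have hlt : ENNReal.ofReal t * μ At < 1 * μ At :=
      (ENNReal.mul_lt_mul_iff_left hAt0 hAt_ne_top).mpr (ENNReal.ofReal_lt_one.mpr ht1)
    rw [one_mul] at hlt
    exact lt_of_lt_of_le hlt hle
  -- main case : 0 < M x < ⊤
  have hc0 : c ≠ 0 := by rw [hcdef]; exact (ENNReal.div_pos hM0 hdtop).ne'
  have hctop : c ≠ ⊤ := by rw [hcdef]; exact (ENNReal.div_lt_top hMtop hd0).ne
  have hkey : c * (ENNReal.ofReal (1 - t) * μ At) = M x * μ (Cyl x) := by
    have h1 : d * μ (Cyl x) = ENNReal.ofReal (1 - t) * μ At := by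
      rw [hddef, mul_assoc, ENNReal.div_mul_cancel hμx0 hμx_ne_top]
    rw [← h1, ← mul_assoc, hcdef, ENNReal.div_mul_cancel hd0 hdtop]
  have hstrict : c * μ (⋃ z ∈ B, Cyl z) < M x * μ (Cyl x) := by
    by_cases hD0 : μ (⋃ z ∈ B, Cyl z) = 0
    · rw [hD0, mul_zero]
      exact ENNReal.mul_pos hM0 hμx0
    · have hex : ∃ z₀ : B, μ (Cyl z₀.val) ≠ 0 := by
        by_contra hno
        push_neg at hno
        rw [hDmeas] at hD0
        exact hD0 (ENNReal.tsum_eq_zero.mpr hno)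
      obtain ⟨z₀, hz₀⟩ := hex
      calc c * μ (⋃ z ∈ B, Cyl z) = ∑' z : B, c * μ (Cyl z.val) := by
            rw [hDmeas, ENNReal.tsum_mul_left]
        _ < ∑' z : B, M z.val * μ (Cyl z.val) := by
            refine ENNReal.tsum_lt_tsum (i := z₀) ?_ ?_ ?_
            · rw [ENNReal.tsum_mul_left, ← hDmeas]
              exact ENNReal.mul_ne_top hctop (measure_ne_top μ _)
            · exact fun z => mul_le_mul_left (le_of_lt z.2.2.1) _
            · exact (ENNReal.mul_lt_mul_iff_left hz₀ (measure_ne_top μ _)).mpr z₀.2.2.1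
        _ ≤ M x * μ (Cyl x) := hville
  have hDlt : μ (⋃ z ∈ B, Cyl z) < ENNReal.ofReal (1 - t) * μ At := by
    rw [← hkey] at hstrict
    exact (ENNReal.mul_lt_mul_iff_right hc0 hctop).mp hstrict
  by_contra hfinal
  push_neg at hfinal
  have h7 : μ At < ENNReal.ofReal t * μ At + ENNReal.ofReal (1 - t) * μ At := by
    calc μ At ≤ μ ((⋃ y ∈ A', Cyl y) ∪ (⋃ z ∈ B, Cyl z)) := measure_mono hcover
      _ ≤ μ (⋃ y ∈ A', Cyl y) + μ (⋃ z ∈ B, Cyl z) := measure_union_le _ _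
      _ ≤ ENNReal.ofReal t * μ At + μ (⋃ z ∈ B, Cyl z) := add_le_add_left hfinal _
      _ < ENNReal.ofReal t * μ At + ENNReal.ofReal (1 - t) * μ At :=
          ENNReal.add_lt_add_left (ENNReal.mul_ne_top ENNReal.ofReal_ne_top hAt_ne_top) hDlt
  have h8 : ENNReal.ofReal t * μ At + ENNReal.ofReal (1 - t) * μ At = μ At := by
    rw [← add_mul, ← ENNReal.ofReal_add ht0.le h1t0.le]
    norm_num
  rw [h8] at h7
  exact lt_irrefl _ h7
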